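/- arXiv:1802.03948 — 2 statements merged into one kernel-verified Lean document; each statement's English description precedes it below -/
import Mathlib

section
/- For all real x with −1 ≤ x ≤ 1 and all n ≥ 0, the second derivative of the Legendre polynomial satisfies |P_n''(x)| ≤ (n−1)·n·(n+1)·(n+2)/8. -/
open Polynomial in
noncomputable def legendre : ℕ → Polynomial ℝ
  | 0 => 1
  | 1 => X
  | (n + 2) =>
      C ((2 * (n : ℝ) + 3) / ((n : ℝ) + 2)) * (X * legendre (n + 1))
        - C (((n : ℝ) + 1) / ((n : ℝ) + 2)) * legendre n

open Polynomial

lemma legendre_rec' (n : ℕ) :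
    C ((n : ℝ) + 2) * legendre (n + 2) =
      C (2 * (n : ℝ) + 3) * (X * legendre (n + 1)) - C ((n : ℝ) + 1) * legendre n := by
  have h : ((n : ℝ) + 2) ≠ 0 := by positivity
  show C ((n : ℝ) + 2) * (C ((2 * (n : ℝ) + 3) / ((n : ℝ) + 2)) * (X * legendre (n + 1))
        - C (((n : ℝ) + 1) / ((n : ℝ) + 2)) * legendre n) = _
  rw [mul_sub]
  simp only [← mul_assoc, ← C_mul, mul_div_cancel₀ _ h]

lemma legendre_rec'' (n : ℕ) :
    (C (n : ℝ) + 2) * legendre (n + 2) =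
      (2 * C (n : ℝ) + 3) * (X * legendre (n + 1)) - (C (n : ℝ) + 1) * legendre n := by
  have := legendre_rec' n
  simpa only [map_add, map_mul, map_ofNat, map_one] using this

lemma AB (n : ℕ) :
    derivative (legendre (n + 1)) = X * derivative (legendre n) + (C (n : ℝ) + 1) * legendre n ∧
    X * derivative (legendre (n + 1)) = derivative (legendre n) + (C (n : ℝ) + 1) * legendre (n + 1) := by
  induction n with
  | zero =>
    constructor
    · show derivative X = X * derivative (legendre 0) + _ * legendre 0
      simp [legendre]
    · show X * derivative X = derivative (legendre 0) + _ * legendre 1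
      simp [legendre]
  | succ n ih =>
    obtain ⟨hA, hB⟩ := ih
    have hnz : (C (n : ℝ) + 2 : Polynomial ℝ) ≠ 0 := by
      have : (C ((n:ℝ) + 2) : Polynomial ℝ) ≠ 0 := by
        simp only [ne_eq, C_eq_zero]; positivity
      rwa [map_add, map_ofNat] at this
    have hrec := legendre_rec'' n
    have hd := congrArg derivative hrec
    simp only [derivative_mul, derivative_sub, derivative_add, derivative_X,
      derivative_ofNat, derivative_one, derivative_C, derivative_mul] at hd
    have hstar : (X ^ 2 - 1) * derivative (legendre (n + 1)) =
        (C (n:ℝ) + 1) * (X * legendre (n + 1) - legendre n) := by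
      linear_combination X * hB - hA
    have hA2 : derivative (legendre (n + 2)) =
        X * derivative (legendre (n + 1)) + (C (n:ℝ) + 1 + 1) * legendre (n + 1) := by
      apply mul_left_cancel₀ hnz
      linear_combination hd + (C (n:ℝ) + 1) * hB
    have hB2 : X * derivative (legendre (n + 2)) =
        derivative (legendre (n + 1)) + (C (n:ℝ) + 1 + 1) * legendre (n + 2) := by
      apply mul_left_cancel₀ hnz
      linear_combination (C (n:ℝ) + 2) * X * hA2 + (C (n:ℝ) + 2) * hstar - (C (n:ℝ) + 2) * hrec
    constructor
    · push_cast
      rw [map_add, map_one]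
      exact hA2
    · push_cast
      rw [map_add, map_one]
      exact hB2

lemma Dsum (n : ℕ) :
    derivative (legendre (n + 2)) =
      derivative (legendre n) + (2 * C (n:ℝ) + 3) * legendre (n + 1) := by
  have hA := (AB (n+1)).1
  have hB := (AB n).2
  push_cast at hA
  rw [map_add, map_one] at hA
  linear_combination hA + hB

lemma ode : ∀ n : ℕ, (X ^ 2 - 1) * derivative (derivative (legendre n))
      + 2 * X * derivative (legendre n) = C ((n:ℝ) * ((n:ℝ) + 1)) * legendre n := by
  intro n
  match n with
  | 0 => simp [legendre]
  | (m + 1) =>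
    obtain ⟨hA, hB⟩ := AB m
    have hstar : (X ^ 2 - 1) * derivative (legendre (m + 1)) =
        (C (m:ℝ) + 1) * (X * legendre (m + 1) - legendre m) := by
      linear_combination X * hB - hA
    have hd := congrArg derivative hstar
    simp only [derivative_mul, derivative_sub, derivative_add, derivative_X,
      derivative_ofNat, derivative_one, derivative_C, derivative_pow, derivative_X,
      derivative_mul, Nat.cast_ofNat, map_ofNat] at hd
    push_cast
    simp only [map_mul, map_add, map_one]
    linear_combination hd + (C (m:ℝ) + 1) * hB

lemma twoStep {P : ℕ → Prop} (h0 : P 0) (h1 : P 1)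
    (hs : ∀ n, P n → P (n + 1) → P (n + 2)) : ∀ n, P n := by
  have key : ∀ n, P n ∧ P (n + 1) := by
    intro n
    induction n with
    | zero => exact ⟨h0, h1⟩
    | succ k ih => exact ⟨ih.2, hs k ih.1 ih.2⟩
  exact fun n => (key n).1

lemma legendre_eval_one : ∀ n : ℕ, (legendre n).eval 1 = 1 := by
  apply twoStep
  · simp [legendre]
  · simp [legendre]
  · intro n h1 h2
    have := congrArg (eval 1) (legendre_rec'' n)
    simp only [eval_mul, eval_add, eval_sub, eval_C, eval_X, eval_ofNat, eval_one, h1, h2] at this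
    have hnz : (n : ℝ) + 2 ≠ 0 := by positivity
    have : ((n:ℝ) + 2) * (legendre (n+2)).eval 1 = (n:ℝ) + 2 := by linarith
    field_simp at this
    linarith [this]

lemma legendre_eval_negone : ∀ n : ℕ, (legendre n).eval (-1) = (-1) ^ n := by
  apply twoStep
  · simp [legendre]
  · simp [legendre]
  · intro n h1 h2
    have := congrArg (eval (-1)) (legendre_rec'' n)
    simp only [eval_mul, eval_add, eval_sub, eval_C, eval_X, eval_ofNat, eval_one, h1, h2] at this
    have hnz : (n : ℝ) + 2 ≠ 0 := by positivity
    have h3 : ((n:ℝ) + 2) * (legendre (n+2)).eval (-1) = ((n:ℝ) + 2) * (-1)^(n+2) := by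
      rw [this]; ring
    exact mul_left_cancel₀ hnz h3

lemma legendre_abs_le_one (n : ℕ) {x : ℝ} (hx : -1 ≤ x) (hx' : x ≤ 1) :
    |(legendre n).eval x| ≤ 1 := by
  match n with
  | 0 => simp [legendre]
  | (m + 1) =>
    set p := legendre (m + 1) with hp
    set F : Polynomial ℝ := (C (m:ℝ) + 1) * (C (m:ℝ) + 2) * p ^ 2
        + (1 - X ^ 2) * (derivative p) ^ 2 with hF
    have hode := ode (m + 1)
    push_cast at hode
    simp only [map_mul, map_add, map_one] at hode
    rw [← hp] at hode
    have hdF : derivative F = 2 * X * (derivative p) ^ 2 := by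
      simp only [hF, derivative_add, derivative_mul, derivative_pow, derivative_C,
        derivative_one, derivative_sub, derivative_X, derivative_ofNat, map_ofNat,
        Nat.cast_ofNat]
      linear_combination (-(2 : Polynomial ℝ) * derivative p) * hode
    set c : ℝ := ((m:ℝ) + 1) * ((m:ℝ) + 2) with hc
    have hcpos : (0:ℝ) < c := by positivity
    have hevalF : ∀ y : ℝ, F.eval y = c * (p.eval y) ^ 2 + (1 - y ^ 2) * ((derivative p).eval y) ^ 2 := by
      intro y
      simp [hF, hc]
    have hderiv : ∀ y : ℝ, deriv (fun t => F.eval t) y = 2 * y * ((derivative p).eval y) ^ 2 := by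
      intro y
      rw [Polynomial.deriv, hdF]
      simp
    have hcont : ContinuousOn (fun t => F.eval t) (Set.Icc (-1:ℝ) 1) :=
      (Polynomial.continuous F).continuousOn
    have hdiff : ∀ s : Set ℝ, DifferentiableOn ℝ (fun t => F.eval t) s :=
      fun s => (F.differentiable).differentiableOn
    have hFle : F.eval x ≤ c := by
      rcases le_or_gt 0 x with h0 | h0
      · have hmono : MonotoneOn (fun t => F.eval t) (Set.Icc (0:ℝ) 1) := by
          apply monotoneOn_of_deriv_nonneg (convex_Icc 0 1)
            ((Polynomial.continuous F).continuousOn) (hdiff _)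
          intro y hy
          rw [interior_Icc] at hy
          rw [hderiv]
          have := hy.1
          positivity
        have h1 : F.eval x ≤ F.eval 1 :=
          hmono ⟨h0, hx'⟩ ⟨zero_le_one, le_refl 1⟩ hx'
        have : F.eval 1 = c := by
          rw [hevalF]
          have := legendre_eval_one (m + 1)
          rw [← hp] at this
          rw [this]; ring
        linarith
      · have hanti : AntitoneOn (fun t => F.eval t) (Set.Icc (-1:ℝ) 0) := by
          apply antitoneOn_of_deriv_nonpos (convex_Icc (-1) 0)
            ((Polynomial.continuous F).continuousOn) (hdiff _)
          intro y hy
          rw [interior_Icc] at hy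
          rw [hderiv]
          have hy2 := hy.2
          nlinarith [sq_nonneg ((derivative p).eval y)]
        have h1 : F.eval x ≤ F.eval (-1) :=
          hanti ⟨le_refl _, by linarith⟩ ⟨hx, h0.le⟩ hx
        have : F.eval (-1) = c := by
          rw [hevalF]
          have := legendre_eval_negone (m + 1)
          rw [← hp] at this
          rw [this]
          have : ((-1:ℝ) ^ (m+1)) ^ 2 = 1 := by
            rw [← pow_mul, mul_comm, pow_mul]
            simp
          rw [this]; ring
        linarith
    have hsq : (p.eval x) ^ 2 ≤ 1 := by
      have h2 := hevalF x
      have h3 : (0:ℝ) ≤ (1 - x ^ 2) * ((derivative p).eval x) ^ 2 := by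
        have : x ^ 2 ≤ 1 := by nlinarith
        nlinarith [sq_nonneg ((derivative p).eval x)]
      have : c * (p.eval x) ^ 2 ≤ c := by linarith
      nlinarith
    rw [abs_le]
    constructor <;> nlinarith

lemma legendre_deriv_bound : ∀ n : ℕ, ∀ x : ℝ, -1 ≤ x → x ≤ 1 →
    |(derivative (legendre n)).eval x| ≤ (n : ℝ) * ((n : ℝ) + 1) / 2 := by
  apply twoStep
  · intro x _ _; simp [legendre]
  · intro x _ _
    show |(derivative X).eval x| ≤ _
    norm_num
  · intro n ih _ x hx hx'
    have hs := congrArg (eval x) (Dsum n)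
    simp only [eval_add, eval_mul, eval_ofNat, eval_C, eval_one] at hs
    rw [hs]
    have h1 := ih x hx hx'
    have h2 := legendre_abs_le_one (n + 1) hx hx'
    have habs := abs_add_le ((derivative (legendre n)).eval x) ((2*(n:ℝ)+3) * (legendre (n+1)).eval x)
    rw [abs_mul, abs_of_nonneg (show (0:ℝ) ≤ 2*(n:ℝ)+3 by positivity)] at habs
    have h4 := mul_le_mul_of_nonneg_left h2 (show (0:ℝ) ≤ 2*(n:ℝ)+3 by positivity)
    push_cast
    nlinarith [habs, h1, h4]

open Polynomial in
/-- Bound for the second derivative of the Legendre polynomial on [-1,1]. -/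
theorem legendre_second_deriv_bound (n : ℕ) (x : ℝ) (hx : -1 ≤ x) (hx' : x ≤ 1) :
    |(derivative (derivative (legendre n))).eval x| ≤
      ((n : ℝ) - 1) * (n : ℝ) * ((n : ℝ) + 1) * ((n : ℝ) + 2) / 8 := by
  induction n using twoStep with
  | h0 =>
    show |(derivative (derivative (1 : Polynomial ℝ))).eval x| ≤ _
    norm_num
  | h1 =>
    show |(derivative (derivative (X : Polynomial ℝ))).eval x| ≤ _
    norm_num
  | hs n ih1 ih2 =>
    have hd := congrArg derivative (Dsum n)
    simp only [derivative_add, derivative_mul, derivative_C, derivative_ofNat,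
      derivative_one, Nat.cast_ofNat, map_ofNat] at hd
    have he := congrArg (eval x) hd
    simp only [eval_add, eval_mul, eval_C, eval_ofNat, eval_one, eval_X,
      zero_mul, mul_zero, add_zero, zero_add, eval_zero] at he
    rw [he]
    have h2 := legendre_deriv_bound (n + 1) x hx hx'
    push_cast at h2 ⊢
    have habs := abs_add_le ((derivative (derivative (legendre n))).eval x)
      (((2 * C (n:ℝ) + 3) * derivative (legendre (n+1))).eval x)
    have h3 : ((2 * C (n:ℝ) + 3) * derivative (legendre (n+1))).eval x
        = (2 * (n:ℝ) + 3) * (derivative (legendre (n+1))).eval x := by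
      simp
    rw [h3] at habs
    rw [abs_mul, abs_of_nonneg (show (0:ℝ) ≤ 2*(n:ℝ)+3 by positivity)] at habs
    have h4 := mul_le_mul_of_nonneg_left h2 (show (0:ℝ) ≤ 2*(n:ℝ)+3 by positivity)
    nlinarith [habs, ih1, h4, Nat.cast_nonneg (α := ℝ) n]
end

section
/- Let −1 ≤ x ≤ 1 and let (p̃_n)_{n≥−1} be a real sequence with p̃_0 = 1 satisfying the perturbed Bonnet recurrence p̃_{n+1} = ((2n+1)·x·p̃_n − n·p̃_{n−1})/(n+1) + ε_n for n ≥ 0, where |ε_n| ≤ ε̄ for all n. Then |p̃_n − P_n(x)| ≤ (n+1)(n+2)·ε̄/4 for all n ≥ 0. -/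
open Polynomial Finset

set_option maxHeartbeats 1000000


lemma leg0 (y : ℝ) : (legendre 0).eval y = 1 := by simp [legendre]
lemma leg1 (y : ℝ) : (legendre 1).eval y = y := by simp [legendre]
lemma leg2 (y : ℝ) (n : ℕ) : (legendre (n+2)).eval y
    = ((2*(n:ℝ)+3)/((n:ℝ)+2)) * (y * (legendre (n+1)).eval y)
      - (((n:ℝ)+1)/((n:ℝ)+2)) * (legendre n).eval y := by
  simp [legendre]

lemma bonnetEval (y : ℝ) (m : ℕ) :
    (2*(m:ℝ)+1) * (y * (legendre m).eval y)
      = ((m:ℝ)+1) * (legendre (m+1)).eval y + (m:ℝ) * (legendre (m-1)).eval y := by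
  cases m with
  | zero => simp [leg0, leg1]
  | succ j =>
    have h := leg2 y j
    push_cast
    have h2 : ((j:ℝ)+2) ≠ 0 := by positivity
    field_simp at h
    push_cast at h
    nlinarith [h]

lemma leg_one (n : ℕ) : (legendre n).eval 1 = 1 := by
  induction n using Nat.strong_induction_on with
  | _ n ih =>
    match n with
    | 0 => simp [leg0]
    | 1 => simp [leg1]
    | (m+2) =>
      rw [leg2, ih (m+1) (by omega), ih m (by omega)]
      have : ((m:ℝ)+2) ≠ 0 := by positivity
      field_simp
      ring


noncomputable def cc : ℕ → ℝ
  | 0 => 1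
  | (j+1) => cc j * (2*(j:ℝ)+1)/(2*(j:ℝ)+2)

noncomputable def DD (n j : ℕ) : ℝ := if j ≤ n then cc j * cc (n - j) else 0

lemma cc_pos (j : ℕ) : 0 < cc j := by
  induction j with
  | zero => norm_num [cc]
  | succ j ih => rw [cc]; positivity

lemma DD_nonneg (n j : ℕ) : 0 ≤ DD n j := by
  unfold DD; split
  · have := cc_pos j; have := cc_pos (n - j); positivity
  · exact le_refl _

-- key identity: (n+2) D(n+2)(j+1) = (2n+3)/2 (D(n+1)(j+1) + D(n+1) j) - (n+1) D n j
lemma DD_id (n j : ℕ) :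
    ((n:ℝ)+2) * DD (n+2) (j+1)
      = (2*(n:ℝ)+3)/2 * (DD (n+1) (j+1) + DD (n+1) j) - ((n:ℝ)+1) * DD n j := by
  rcases le_or_gt j n with hjn | hjn
  · -- interior: j ≤ n
    have h1 : DD (n+2) (j+1) = cc (j+1) * cc (n+1-j) := by
      unfold DD; rw [if_pos (by omega)]; congr 2 <;> omega
    have h2 : DD (n+1) (j+1) = cc (j+1) * cc (n-j) := by
      unfold DD; rw [if_pos (by omega)]; congr 2 <;> omega
    have h3 : DD (n+1) j = cc j * cc (n+1-j) := by
      unfold DD; rw [if_pos (by omega)]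
    have h4 : DD n j = cc j * cc (n-j) := by unfold DD; rw [if_pos hjn]
    obtain ⟨i, hi⟩ : ∃ i, n - j = i := ⟨n - j, rfl⟩
    have hni : n + 1 - j = i + 1 := by omega
    rw [h1, h2, h3, h4, hi, hni]
    have e1 : cc (j+1) = cc j * (2*(j:ℝ)+1)/(2*(j:ℝ)+2) := by rw [cc]
    have e2 : cc (i+1) = cc i * (2*(i:ℝ)+1)/(2*(i:ℝ)+2) := by rw [cc]
    have hij : (n:ℝ) = (j:ℝ) + (i:ℝ) := by
      have : n = j + i := by omega
      exact_mod_cast congrArg (Nat.cast (R := ℝ)) this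
    rw [e1, e2, hij]
    have hj2 : (2*(j:ℝ)+2) ≠ 0 := by positivity
    have hi2 : (2*(i:ℝ)+2) ≠ 0 := by positivity
    field_simp
    ring
  · rcases Nat.eq_or_lt_of_le hjn with hj | hj
    · -- j = n+1
      have hj' : j = n + 1 := by omega
      subst hj'
      have h1 : DD (n+2) (n+2) = cc (n+2) * cc 0 := by
        unfold DD; rw [if_pos le_rfl]; congr 2 <;> omega
      have h2 : DD (n+1) (n+2) = 0 := by unfold DD; rw [if_neg (by omega)]
      have h3 : DD (n+1) (n+1) = cc (n+1) * cc 0 := by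
        unfold DD; rw [if_pos le_rfl]; congr 2 <;> omega
      have h4 : DD n (n+1) = 0 := by unfold DD; rw [if_neg (by omega)]
      rw [h1, h2, h3, h4]
      have e1 : cc (n+2) = cc (n+1) * (2*((n:ℝ)+1)+1)/(2*((n:ℝ)+1)+2) := by
        rw [show n+2 = (n+1)+1 from rfl, cc]; push_cast; ring
      rw [e1]
      have : (2*((n:ℝ)+1)+2) ≠ 0 := by positivity
      field_simp
      ring
    · -- j ≥ n+2 : everything 0
      have h1 : DD (n+2) (j+1) = 0 := by unfold DD; rw [if_neg (by omega)]
      have h2 : DD (n+1) (j+1) = 0 := by unfold DD; rw [if_neg (by omega)]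
      have h3 : DD (n+1) j = 0 := by unfold DD; rw [if_neg (by omega)]
      have h4 : DD n j = 0 := by unfold DD; rw [if_neg (by omega)]
      rw [h1, h2, h3, h4]; ring

section Pcos
variable (θ : ℝ)

lemma DD_zero_of_lt {n j : ℕ} (h : n < j) : DD n j = 0 := by
  unfold DD; rw [if_neg (by omega)]

noncomputable def Fs (n M : ℕ) : ℝ :=
  ∑ j ∈ range M, DD n j * Real.cos (((n:ℝ) - 2*j) * θ)

lemma Fs_ext (n : ℕ) {M M' : ℕ} (h : n+1 ≤ M) (h' : M ≤ M') :
    Fs θ n M' = Fs θ n M := by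
  unfold Fs
  refine (Finset.sum_subset (Finset.range_subset_range.2 h') ?_).symm
  intro j _ hj
  rw [DD_zero_of_lt (by simp at hj ⊢; omega), zero_mul]

lemma leg_cos : ∀ n : ℕ, (legendre n).eval (Real.cos θ) = Fs θ n (n+1) := by
  intro n
  induction n using Nat.strong_induction_on with
  | _ n ih =>
    match n with
    | 0 => simp [legendre, Fs, DD, cc]
    | 1 =>
      simp [legendre, Fs, DD, cc, Finset.sum_range_succ]
      ring_nf
      rw [Real.cos_neg]
      ring
    | (n+2) =>
      rw [leg2, ih (n+1) (by omega), ih n (by omega)]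
      have hn2 : ((n:ℝ)+2) ≠ 0 := by positivity
      have key : ((n:ℝ)+2) * Fs θ (n+2) (n+3)
          = (2*(n:ℝ)+3) * (Real.cos θ * Fs θ (n+1) (n+2)) - ((n:ℝ)+1) * Fs θ n (n+1) := by
        -- rewrite everything as sums over suitable ranges
        have hcos : ∀ a : ℝ, Real.cos θ * Real.cos (a*θ)
            = (Real.cos ((a+1)*θ) + Real.cos ((a-1)*θ))/2 := by
          intro a
          have h1 : (a+1)*θ = a*θ + θ := by ring
          have h2 : (a-1)*θ = a*θ - θ := by ring
          rw [h1, h2, Real.cos_add, Real.cos_sub]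
          ring
        have e1 : Real.cos θ * Fs θ (n+1) (n+2)
            = ∑ j ∈ range (n+2), DD (n+1) j *
                ((Real.cos ((((n:ℝ)+2) - 2*j) * θ) + Real.cos (((n:ℝ) - 2*j) * θ))/2) := by
          unfold Fs
          rw [Finset.mul_sum]
          refine Finset.sum_congr rfl fun j _ => ?_
          rw [mul_left_comm, hcos]
          congr 3 <;> push_cast <;> ring
        have e0 : Fs θ n (n+1) = Fs θ n (n+2) := (Fs_ext θ n le_rfl (by omega)).symm
        rw [e1, e0]
        unfold Fs
        push_cast
        rw [Finset.mul_sum, Finset.mul_sum, Finset.mul_sum, ← Finset.sum_sub_distrib]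
        -- now LHS is sum over range (n+3), RHS sum over range (n+2)
        have lhs_split : ∑ j ∈ range (n+3), ((n:ℝ)+2) * (DD (n+2) j * Real.cos ((((n:ℝ)+2) - 2*j) * θ))
            = ∑ j ∈ range (n+2), (2*(n:ℝ)+3)/2 * DD (n+1) j * Real.cos ((((n:ℝ)+2) - 2*j) * θ)
              + ∑ j ∈ range (n+2), ((2*(n:ℝ)+3)/2 * DD (n+1) j - ((n:ℝ)+1) * DD n j)
                  * Real.cos (((n:ℝ) - 2*j) * θ) := by
          have ext2 : ∑ j ∈ range (n+2), (2*(n:ℝ)+3)/2 * DD (n+1) j * Real.cos ((((n:ℝ)+2) - 2*j) * θ)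
              = ∑ j ∈ range (n+3), (2*(n:ℝ)+3)/2 * DD (n+1) j * Real.cos ((((n:ℝ)+2) - 2*j) * θ) := by
            refine (Finset.sum_subset (Finset.range_subset_range.2 (by omega)) ?_)
            intro j _ hj
            rw [DD_zero_of_lt (by simp at hj ⊢; omega)]
            ring
          rw [ext2, ← sub_eq_iff_eq_add', ← Finset.sum_sub_distrib]
          rw [Finset.sum_range_succ']
          have hf0 : ((n:ℝ)+2) * (DD (n+2) 0 * Real.cos ((((n:ℝ)+2) - 2*(0:ℕ)) * θ))
              - (2*(n:ℝ)+3)/2 * DD (n+1) 0 * Real.cos ((((n:ℝ)+2) - 2*(0:ℕ)) * θ) = 0 := by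
            have hD0 : DD (n+2) 0 = cc (n+2) := by unfold DD; simp [cc]
            have hD1 : DD (n+1) 0 = cc (n+1) := by unfold DD; simp [cc]
            have hcc : cc (n+2) = cc (n+1) * (2*((n:ℝ)+1)+1)/(2*((n:ℝ)+1)+2) := by
              rw [show n+2 = (n+1)+1 from rfl, cc]; push_cast; ring
            rw [hD0, hD1, hcc]
            have : (2*((n:ℝ)+1)+2) ≠ 0 := by positivity
            field_simp
            ring
          rw [hf0, add_zero]
          refine Finset.sum_congr rfl fun j _ => ?_
          have hid := DD_id n j
          push_cast
          rw [show ((n:ℝ) + 2 - 2 * ((j:ℝ) + 1)) = ((n:ℝ) - 2 * (j:ℝ)) from by ring]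
          linear_combination Real.cos (((n:ℝ) - 2*(j:ℝ)) * θ) * hid
        rw [lhs_split, ← Finset.sum_add_distrib]
        refine Finset.sum_congr rfl fun j _ => ?_
        ring
      field_simp
      linarith [key]

lemma DD_sum (n : ℕ) : ∑ j ∈ range (n+1), DD n j = 1 := by
  have h := leg_cos 0 n
  rw [Real.cos_zero, leg_one] at h
  unfold Fs at h
  simp only [mul_zero, Real.cos_zero, mul_one] at h
  exact h.symm

lemma leg_bound {x : ℝ} (hx : -1 ≤ x) (hx' : x ≤ 1) (n : ℕ) :
    |(legendre n).eval x| ≤ 1 := by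
  have hc : Real.cos (Real.arccos x) = x := Real.cos_arccos hx hx'
  rw [← hc, leg_cos]
  calc |Fs (Real.arccos x) n (n+1)|
      ≤ ∑ j ∈ range (n+1), |DD n j * Real.cos (((n:ℝ) - 2*j) * Real.arccos x)| :=
        Finset.abs_sum_le_sum_abs _ _
    _ ≤ ∑ j ∈ range (n+1), DD n j := by
        refine Finset.sum_le_sum fun j _ => ?_
        rw [abs_mul, abs_of_nonneg (DD_nonneg n j)]
        exact mul_le_of_le_one_right (DD_nonneg n j) (Real.abs_cos_le_one _)
    _ = 1 := DD_sum n


end Pcos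

noncomputable def cG (k : ℕ) : ℕ → ℕ → ℝ
  | 0 => fun _ => 0
  | 1 => fun m => if k = 0 then (if m = 0 then 1 else 0) else 0
  | (n+2) => fun m =>
      if n + 2 ≤ k then 0
      else if n + 1 = k then (if m = 0 then 1 else 0)
      else ((2*(n:ℝ)+3) * (((m:ℝ)/(2*(m:ℝ)-1)) * cG k (n+1) (m-1)
             + (((m:ℝ)+1)/(2*(m:ℝ)+3)) * cG k (n+1) (m+1))
            - ((n:ℝ)+1) * cG k n m) / ((n:ℝ)+2)

lemma cG_zero_of_le {k n : ℕ} (h : n ≤ k) (m : ℕ) : cG k n m = 0 := by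
  match n with
  | 0 => rfl
  | 1 => unfold cG; rw [if_neg (by omega)]
  | (n+2) => unfold cG; rw [if_pos (by omega)]

lemma cG_base (k m : ℕ) : cG k (k+1) m = if m = 0 then 1 else 0 := by
  match k with
  | 0 => rfl
  | (j+1) =>
    show cG (j+1) (j+2) m = _
    unfold cG
    rw [if_neg (by omega), if_pos (by omega)]

lemma cG_rec {k n : ℕ} (h : k + 1 ≤ n) (m : ℕ) :
    cG k (n+1) m = ((2*(n:ℝ)+1) * (((m:ℝ)/(2*(m:ℝ)-1)) * cG k n (m-1)
             + (((m:ℝ)+1)/(2*(m:ℝ)+3)) * cG k n (m+1))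
            - (n:ℝ) * cG k (n-1) m) / ((n:ℝ)+1) := by
  obtain ⟨j, rfl⟩ : ∃ j, n = j + 1 := ⟨n - 1, by omega⟩
  show cG k (j+2) m = _
  conv_lhs => rw [cG]
  simp only []
  rw [if_neg (by omega), if_neg (by omega)]
  simp only [Nat.add_sub_cancel]
  push_cast
  ring

lemma cG_support {k : ℕ} : ∀ n m, n ≤ m → cG k n m = 0 := by
  intro n
  induction n using Nat.strong_induction_on with
  | _ n ih =>
    match n with
    | 0 => intro m _; rfl
    | 1 =>
      intro m hm
      unfold cG
      split
      · rw [if_neg (by omega)]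
      · rfl
    | (n+2) =>
      intro m hm
      unfold cG
      split
      · rfl
      split
      · rw [if_neg (by omega)]
      · rw [ih (n+1) (by omega) (m-1) (by omega), ih (n+1) (by omega) (m+1) (by omega),
          ih n (by omega) m (by omega)]
        ring

lemma coef_nonneg (m : ℕ) : 0 ≤ (m:ℝ)/(2*(m:ℝ)-1) := by
  cases m with
  | zero => norm_num
  | succ j =>
    have hj : (0:ℝ) ≤ (j:ℝ) := Nat.cast_nonneg j
    apply div_nonneg (by push_cast; linarith) (by push_cast; linarith)

lemma cG_invariant (k : ℕ) : ∀ n, (∀ m, 0 ≤ cG k n m) ∧ (∀ m, 0 ≤ cG k (n+1) m) ∧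
    (∀ m, ((n:ℝ)+1) * cG k n m ≤ ((2*(n:ℝ)+3)*((m:ℝ)+1)/(2*(m:ℝ)+3)) * cG k (n+1) (m+1)) := by
  intro n
  induction n with
  | zero =>
    have h1 : ∀ m, (0:ℝ) ≤ cG k 1 m := by
      intro m
      show 0 ≤ cG k 1 m
      unfold cG
      split
      · split <;> norm_num
      · exact le_refl 0
    refine ⟨fun m => le_of_eq (cG_zero_of_le (by omega) m).symm, h1, fun m => ?_⟩
    rw [cG_zero_of_le (by omega) m]
    have h2 : (0:ℝ) ≤ (2*(0:ℝ)+3)*((m:ℝ)+1)/(2*(m:ℝ)+3) := by positivity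
    push_cast
    nlinarith [h1 (m+1)]
  | succ n ih =>
    obtain ⟨P0, P1, A0⟩ := ih
    have P2 : ∀ m, 0 ≤ cG k (n+2) m := by
      intro m
      rcases le_or_gt (n+2) k with hk | hk
      · rw [cG_zero_of_le hk m]
      rcases eq_or_lt_of_le (show k ≤ n+1 by omega) with hk2 | hk2
      · subst hk2; rw [cG_base]; split <;> norm_num
      · have hrec := cG_rec (show k+1 ≤ n+1 by omega) m
        simp only [Nat.add_sub_cancel] at hrec
        rw [hrec]
        apply div_nonneg _ (by positivity)
        have hA := A0 m
        have ht1 : 0 ≤ (2*(n:ℝ)+3) * ((m:ℝ)/(2*(m:ℝ)-1) * cG k (n+1) (m-1)) := by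
          have := coef_nonneg m
          have := P1 (m-1)
          positivity
        have hdecomp : (2*((n:ℝ)+1)+1) * ((m:ℝ)/(2*(m:ℝ)-1) * cG k (n+1) (m-1)
              + ((m:ℝ)+1)/(2*(m:ℝ)+3) * cG k (n+1) (m+1)) - ((n:ℝ)+1) * cG k n m
            = (2*(n:ℝ)+3) * ((m:ℝ)/(2*(m:ℝ)-1) * cG k (n+1) (m-1))
              + ((2*(n:ℝ)+3)*((m:ℝ)+1)/(2*(m:ℝ)+3) * cG k (n+1) (m+1)
                 - ((n:ℝ)+1) * cG k n m) := by ring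
        push_cast
        rw [hdecomp]
        exact add_nonneg ht1 (sub_nonneg.2 hA)
    refine ⟨P1, P2, fun m => ?_⟩
    rcases le_or_gt (n+1) k with hk | hk
    · rw [cG_zero_of_le hk m]
      have := P2 (m+1)
      have h2 : (0:ℝ) ≤ (2*((n:ℝ)+1)+3)*((m:ℝ)+1)/(2*(m:ℝ)+3) := by positivity
      push_cast
      nlinarith
    · -- k + 1 ≤ n + 1
      have hrec := cG_rec (show k+1 ≤ n+1 by omega) (m+1)
      simp only [Nat.add_sub_cancel] at hrec
      rcases le_or_gt (n+1) m with hm | hm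
      · rw [cG_support (n+1) m hm]
        have := P2 (m+1)
        have h2 : (0:ℝ) ≤ (2*((n:ℝ)+1)+3)*((m:ℝ)+1)/(2*(m:ℝ)+3) := by positivity
        push_cast
        nlinarith
      · -- m ≤ n
        have hmn : (m:ℝ) ≤ (n:ℝ) := by exact_mod_cast Nat.lt_succ_iff.mp hm
        have hA := A0 (m+1)
        push_cast at hA
        have hc : 0 ≤ cG k (n+1) m := P1 m
        set c := cG k (n+1) m with hcdef
        have hN : (2*(n:ℝ)+3)*((((m:ℝ)+1)/(2*((m:ℝ)+1)-1))*c)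
            ≤ (2*((n:ℝ)+1)+1) * (((m:ℝ)+1)/(2*((m:ℝ)+1)-1) * c
                + (((m:ℝ)+1)+1)/(2*((m:ℝ)+1)+3) * cG k (n+1) (m+1+1))
              - ((n:ℝ)+1) * cG k n (m+1) := by
          have hdecomp : (2*((n:ℝ)+1)+1) * (((m:ℝ)+1)/(2*((m:ℝ)+1)-1) * c
                + (((m:ℝ)+1)+1)/(2*((m:ℝ)+1)+3) * cG k (n+1) (m+1+1))
              - ((n:ℝ)+1) * cG k n (m+1)
            = (2*(n:ℝ)+3)*((((m:ℝ)+1)/(2*((m:ℝ)+1)-1))*c)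
              + ((2*(n:ℝ)+3)*(((m:ℝ)+1)+1)/(2*((m:ℝ)+1)+3) * cG k (n+1) (m+1+1)
                 - ((n:ℝ)+1) * cG k n (m+1)) := by ring
          rw [hdecomp]
          linarith [hA]
        have hlow : ((2*(n:ℝ)+3)*((m:ℝ)+1)/((2*(m:ℝ)+1)*((n:ℝ)+2))) * c ≤ cG k (n+2) (m+1) := by
          have e1 : ((2*(n:ℝ)+3)*((m:ℝ)+1)/((2*(m:ℝ)+1)*((n:ℝ)+2))) * c
              = ((2*(n:ℝ)+3)*((((m:ℝ)+1)/(2*((m:ℝ)+1)-1))*c))/((n:ℝ)+1+1) := by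
            have d1 : (2*(m:ℝ)+1) ≠ 0 := by positivity
            have d2 : ((n:ℝ)+2) ≠ 0 := by positivity
            have d3 : (2*((m:ℝ)+1)-1) ≠ 0 := by intro h; apply d1; linarith
            have d4 : ((n:ℝ)+1+1) ≠ 0 := by positivity
            field_simp
            ring
          rw [e1]
          calc ((2*(n:ℝ)+3)*((((m:ℝ)+1)/(2*((m:ℝ)+1)-1))*c))/((n:ℝ)+1+1)
              ≤ ((2*((n:ℝ)+1)+1) * (((m:ℝ)+1)/(2*((m:ℝ)+1)-1) * c
                + (((m:ℝ)+1)+1)/(2*((m:ℝ)+1)+3) * cG k (n+1) (m+1+1))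
              - ((n:ℝ)+1) * cG k n (m+1))/((n:ℝ)+1+1) := by
                exact div_le_div_of_nonneg_right hN (by positivity)
            _ = cG k (n+2) (m+1) := by
                rw [hrec]; push_cast; ring_nf
        have hKq : ((n:ℝ)+2) ≤ ((2*((n:ℝ)+1)+3)*((m:ℝ)+1)/(2*(m:ℝ)+3))
            * ((2*(n:ℝ)+3)*((m:ℝ)+1)/((2*(m:ℝ)+1)*((n:ℝ)+2))) := by
          rw [div_mul_div_comm, le_div_iff₀ (by positivity)]
          have hm0 : (0:ℝ) ≤ (m:ℝ) := Nat.cast_nonneg m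
          have key : (0:ℝ) ≤ ((n:ℝ)-(m:ℝ)+1)*((n:ℝ)+(m:ℝ)+3) := by
            apply mul_nonneg <;> linarith
          nlinarith [key]
        have hK : (0:ℝ) ≤ (2*((n:ℝ)+1)+3)*((m:ℝ)+1)/(2*(m:ℝ)+3) := by positivity
        push_cast
        calc ((n:ℝ)+1+1) * c
            ≤ (((2*((n:ℝ)+1)+3)*((m:ℝ)+1)/(2*(m:ℝ)+3))
                * ((2*(n:ℝ)+3)*((m:ℝ)+1)/((2*(m:ℝ)+1)*((n:ℝ)+2)))) * c := by
              nlinarith [mul_le_mul_of_nonneg_right hKq hc]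
          _ = ((2*((n:ℝ)+1)+3)*((m:ℝ)+1)/(2*(m:ℝ)+3))
                * (((2*(n:ℝ)+3)*((m:ℝ)+1)/((2*(m:ℝ)+1)*((n:ℝ)+2))) * c) := by ring
          _ ≤ ((2*((n:ℝ)+1)+3)*((m:ℝ)+1)/(2*(m:ℝ)+3)) * cG k (n+1+1) (m+1) :=
              mul_le_mul_of_nonneg_left hlow hK

section SgSec
variable (ℓ : ℕ → ℝ) (y : ℝ)

noncomputable def Sg (k n : ℕ) : ℝ := ∑ m ∈ range n, cG k n m * ℓ m

lemma Sg_ext (k : ℕ) {n M : ℕ} (h : n ≤ M) :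
    ∑ m ∈ range M, cG k n m * ℓ m = Sg ℓ k n := by
  unfold Sg
  refine (Finset.sum_subset (Finset.range_subset_range.2 h) ?_).symm
  intro m _ hm
  rw [cG_support n m (by simp at hm; omega), zero_mul]

lemma Sg_zero {k n : ℕ} (h : n ≤ k) : Sg ℓ k n = 0 := by
  unfold Sg
  refine Finset.sum_eq_zero fun m _ => ?_
  rw [cG_zero_of_le h m, zero_mul]

lemma Sg_base (k : ℕ) : Sg ℓ k (k+1) = ℓ 0 := by
  unfold Sg
  rw [Finset.sum_eq_single 0]
  · rw [cG_base]; norm_num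
  · intro m _ hm; rw [cG_base]; rw [if_neg hm, zero_mul]
  · intro h; simp at h

lemma Sg_rec (hℓ : ∀ m : ℕ, (2*(m:ℝ)+1) * (y * ℓ m) = ((m:ℝ)+1) * ℓ (m+1) + (m:ℝ) * ℓ (m-1))
    {k n : ℕ} (h : k+1 ≤ n) :
    ((n:ℝ)+1) * Sg ℓ k (n+1) = (2*(n:ℝ)+1) * (y * Sg ℓ k n) - (n:ℝ) * Sg ℓ k (n-1) := by
  have hn1 : ((n:ℝ)+1) ≠ 0 := by positivity
  have hstep : ((n:ℝ)+1) * Sg ℓ k (n+1)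
      = ∑ m ∈ range (n+2), ((2*(n:ℝ)+1) * (((m:ℝ)/(2*(m:ℝ)-1)) * cG k n (m-1)
             + (((m:ℝ)+1)/(2*(m:ℝ)+3)) * cG k n (m+1)) - (n:ℝ) * cG k (n-1) m) * ℓ m := by
    rw [← Sg_ext ℓ k (show n+1 ≤ n+2 by omega), Finset.mul_sum]
    refine Finset.sum_congr rfl fun m _ => ?_
    rw [cG_rec h m]
    field_simp
  have hsplit : ∑ m ∈ range (n+2), ((2*(n:ℝ)+1) * (((m:ℝ)/(2*(m:ℝ)-1)) * cG k n (m-1)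
             + (((m:ℝ)+1)/(2*(m:ℝ)+3)) * cG k n (m+1)) - (n:ℝ) * cG k (n-1) m) * ℓ m
      = (2*(n:ℝ)+1) * ((∑ m ∈ range (n+2), ((m:ℝ)/(2*(m:ℝ)-1)) * cG k n (m-1) * ℓ m)
          + (∑ m ∈ range (n+2), (((m:ℝ)+1)/(2*(m:ℝ)+3)) * cG k n (m+1) * ℓ m))
        - (n:ℝ) * ∑ m ∈ range (n+2), cG k (n-1) m * ℓ m := by
    rw [mul_add, Finset.mul_sum, Finset.mul_sum, Finset.mul_sum, ← Finset.sum_add_distrib,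
      ← Finset.sum_sub_distrib]
    refine Finset.sum_congr rfl fun m _ => ?_
    ring
  have hthird : ∑ m ∈ range (n+2), cG k (n-1) m * ℓ m = Sg ℓ k (n-1) :=
    Sg_ext ℓ k (by omega)
  -- A1 via shift
  have hA1 : ∑ m ∈ range (n+2), ((m:ℝ)/(2*(m:ℝ)-1)) * cG k n (m-1) * ℓ m
      = ∑ j ∈ range (n+1), (((j:ℝ)+1)/(2*(j:ℝ)+1)) * cG k n j * ℓ (j+1) := by
    rw [Finset.sum_range_succ']
    norm_num
    refine Finset.sum_congr rfl fun j _ => ?_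
    push_cast
    rw [show (2*((j:ℝ)+1)-1) = 2*(j:ℝ)+1 from by ring]
  -- A2 restricted
  have hA2 : ∑ m ∈ range (n+2), (((m:ℝ)+1)/(2*(m:ℝ)+3)) * cG k n (m+1) * ℓ m
      = ∑ i ∈ range n, (((i:ℝ)+1)/(2*(i:ℝ)+3)) * cG k n (i+1) * ℓ i := by
    refine (Finset.sum_subset (Finset.range_subset_range.2 (by omega)) ?_).symm
    intro m _ hm
    rw [cG_support n (m+1) (by simp at hm; omega)]
    ring
  -- B sums
  have hB : y * Sg ℓ k n = (∑ j ∈ range (n+1), (((j:ℝ)+1)/(2*(j:ℝ)+1)) * cG k n j * ℓ (j+1))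
      + (∑ j ∈ range (n+1), ((j:ℝ)/(2*(j:ℝ)+1)) * cG k n j * ℓ (j-1)) := by
    rw [← Sg_ext ℓ k (show n ≤ n+1 by omega), Finset.mul_sum, ← Finset.sum_add_distrib]
    refine Finset.sum_congr rfl fun j _ => ?_
    have hj := hℓ j
    have hj1 : (2*(j:ℝ)+1) ≠ 0 := by positivity
    field_simp
    linear_combination cG k n j * hj
  have hB2 : ∑ j ∈ range (n+1), ((j:ℝ)/(2*(j:ℝ)+1)) * cG k n j * ℓ (j-1)
      = ∑ i ∈ range n, (((i:ℝ)+1)/(2*(i:ℝ)+3)) * cG k n (i+1) * ℓ i := by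
    rw [Finset.sum_range_succ']
    norm_num
    refine Finset.sum_congr rfl fun i _ => ?_
    push_cast
    rw [show (2*((i:ℝ)+1)+1) = 2*(i:ℝ)+3 from by ring]
  rw [hstep, hsplit, hthird, hA1, hA2, ← hB2, ← hB]

end SgSec

noncomputable def tG (k n : ℕ) : ℝ := Sg (fun _ => 1) k n

lemma one_bonnet : ∀ m : ℕ, (2*(m:ℝ)+1) * ((1:ℝ) * (fun _ => (1:ℝ)) m)
    = ((m:ℝ)+1) * (fun _ => (1:ℝ)) (m+1) + (m:ℝ) * (fun _ => (1:ℝ)) (m-1) := by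
  intro m; simp; ring

lemma tG_nonneg (k n : ℕ) : 0 ≤ tG k n := by
  unfold tG Sg
  refine Finset.sum_nonneg fun m _ => ?_
  have := (cG_invariant k n).1 m
  simp only [mul_one]
  exact this

lemma tG_rec {k n : ℕ} (h : k+1 ≤ n) :
    ((n:ℝ)+1) * tG k (n+1) = (2*(n:ℝ)+1) * tG k n - (n:ℝ) * tG k (n-1) := by
  have := Sg_rec (fun _ => (1:ℝ)) 1 one_bonnet h
  simpa [tG] using this

noncomputable def TT (n : ℕ) : ℝ := ∑ k ∈ range n, tG k n

lemma TT_rec (j : ℕ) : ((j:ℝ)+2) * TT (j+2)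
    = (2*(j:ℝ)+3) * TT (j+1) - ((j:ℝ)+1) * TT j + ((j:ℝ)+2) := by
  have hsum : TT (j+2) = (∑ k ∈ range (j+1), tG k (j+2)) + tG (j+1) (j+2) := by
    unfold TT; rw [Finset.sum_range_succ]
  have hbase : tG (j+1) (j+2) = 1 := Sg_base (fun _ => 1) (j+1)
  have hmain : ((j:ℝ)+2) * (∑ k ∈ range (j+1), tG k (j+2))
      = (2*(j:ℝ)+3) * TT (j+1) - ((j:ℝ)+1) * (∑ k ∈ range (j+1), tG k j) := by
    rw [Finset.mul_sum]
    have : ∀ k ∈ range (j+1), ((j:ℝ)+2) * tG k (j+2)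
        = (2*(j:ℝ)+3) * tG k (j+1) - ((j:ℝ)+1) * tG k j := by
      intro k hk
      have hkk : k + 1 ≤ j + 1 := by simp at hk; omega
      have := tG_rec (n := j+1) hkk
      push_cast at this
      convert this using 2 <;> push_cast <;> ring
    rw [Finset.sum_congr rfl this, Finset.sum_sub_distrib, ← Finset.mul_sum, ← Finset.mul_sum]
    rfl
  have hlast : (∑ k ∈ range (j+1), tG k j) = TT j := by
    unfold TT
    rw [Finset.sum_range_succ, show tG j j = 0 from Sg_zero _ (le_refl j), add_zero]
  rw [hsum, hbase, mul_add, hmain, hlast]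
  ring

lemma TT_val : ∀ n : ℕ, TT n = (n:ℝ)*((n:ℝ)+3)/4 ∧ TT (n+1) = ((n:ℝ)+1)*((n:ℝ)+4)/4 := by
  intro n
  induction n with
  | zero =>
    constructor
    · unfold TT; simp
    · unfold TT
      rw [Finset.sum_range_succ]
      simp [tG, Sg_base (fun _ => (1:ℝ)) 0]
  | succ n ih =>
    obtain ⟨h0, h1⟩ := ih
    have h2 := TT_rec n
    constructor
    · push_cast; linarith [h1]
    · have : TT (n+2) = ((2*(n:ℝ)+3) * TT (n+1) - ((n:ℝ)+1) * TT n + ((n:ℝ)+2))/((n:ℝ)+2) := by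
        field_simp
        linarith [h2]
      rw [this, h0, h1]
      have hn2 : ((n:ℝ)+2) ≠ 0 := by positivity
      push_cast
      field_simp
      ring

/-- Error propagation in the perturbed Bonnet recurrence. -/
theorem perturbed_bonnet_error (x : ℝ) (hx : -1 ≤ x) (hx' : x ≤ 1)
    (p : ℕ → ℝ) (ε : ℕ → ℝ) (εbar : ℝ) (hε : ∀ n, |ε n| ≤ εbar)
    (h0 : p 0 = 1)
    (hrec : ∀ n : ℕ, p (n + 1) =
      ((2 * (n : ℝ) + 1) * x * p n - (n : ℝ) * p (n - 1)) / ((n : ℝ) + 1) + ε n) :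
    ∀ n : ℕ, |p n - (legendre n).eval x| ≤ ((n : ℝ) + 1) * ((n : ℝ) + 2) / 4 * εbar := by
  set L : ℕ → ℝ := fun m => (legendre m).eval x with hL
  have hLb : ∀ m : ℕ, (2*(m:ℝ)+1) * (x * L m) = ((m:ℝ)+1) * L (m+1) + (m:ℝ) * L (m-1) :=
    fun m => bonnetEval x m
  -- error decomposition
  have decomp : ∀ n : ℕ, (p n - L n = ∑ k ∈ range n, ε k * Sg L k n)
      ∧ (p (n+1) - L (n+1) = ∑ k ∈ range (n+1), ε k * Sg L k (n+1)) := by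
    intro n
    induction n with
    | zero =>
      constructor
      · simp [h0, hL, leg0]
      · rw [Finset.sum_range_succ]
        simp only [Finset.range_zero, Finset.sum_empty, zero_add]
        rw [Sg_base L 0, hrec 0]
        simp [hL, leg0, leg1, h0]
    | succ n ih =>
      obtain ⟨ih0, ih1⟩ := ih
      refine ⟨ih1, ?_⟩
      have hp : p (n+2) = ((2*(n:ℝ)+3) * x * p (n+1) - ((n:ℝ)+1) * p n) / ((n:ℝ)+2) + ε (n+1) := by
        have h' := hrec (n+1)
        simp only [Nat.add_sub_cancel] at h'
        push_cast at h'
        rw [h']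
        ring
      have hLrec : L (n+2) = ((2*(n:ℝ)+3) * x * L (n+1) - ((n:ℝ)+1) * L n) / ((n:ℝ)+2) := by
        rw [hL]
        simp only [leg2 x n]
        field_simp
      have hsum : ∑ k ∈ range (n+2), ε k * Sg L k (n+2)
          = (∑ k ∈ range (n+1), ε k * Sg L k (n+2)) + ε (n+1) * 1 := by
        rw [Finset.sum_range_succ, Sg_base L (n+1), show L 0 = 1 from leg0 x]
      have hSgr : ∀ k ∈ range (n+1), ε k * Sg L k (n+2)
          = ε k * (((2*(n:ℝ)+3) * (x * Sg L k (n+1)) - ((n:ℝ)+1) * Sg L k n) / ((n:ℝ)+2)) := by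
        intro k hk
        have hkk : k + 1 ≤ n + 1 := by simp at hk; omega
        have := Sg_rec L x hLb (n := n+1) hkk
        simp only [Nat.add_sub_cancel] at this
        push_cast at this
        congr 1
        have hn2 : ((n:ℝ)+2) ≠ 0 := by positivity
        rw [eq_div_iff hn2]
        linarith [this]
      have hsplit : ∑ k ∈ range (n+1), ε k * Sg L k (n+2)
          = ((2*(n:ℝ)+3) * (x * ∑ k ∈ range (n+1), ε k * Sg L k (n+1))
             - ((n:ℝ)+1) * ∑ k ∈ range (n+1), ε k * Sg L k n) / ((n:ℝ)+2) := by
        have hn2 : ((n:ℝ)+2) ≠ 0 := by positivity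
        rw [Finset.sum_congr rfl hSgr, eq_div_iff hn2, Finset.sum_mul, Finset.mul_sum,
          Finset.mul_sum, Finset.mul_sum, ← Finset.sum_sub_distrib]
        refine Finset.sum_congr rfl fun k _ => ?_
        field_simp
      have hlastsum : ∑ k ∈ range (n+1), ε k * Sg L k n
          = ∑ k ∈ range n, ε k * Sg L k n := by
        rw [Finset.sum_range_succ, Sg_zero L (le_refl n), mul_zero, add_zero]
      rw [hp, hsum, hsplit, hlastsum, ← ih0, ← ih1, hLrec]
      ring
  -- final bound
  intro n
  have hε0 : 0 ≤ εbar := le_trans (abs_nonneg _) (hε 0)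
  have habs : |p n - L n| ≤ εbar * TT n := by
    rw [(decomp n).1]
    calc |∑ k ∈ range n, ε k * Sg L k n|
        ≤ ∑ k ∈ range n, |ε k * Sg L k n| := Finset.abs_sum_le_sum_abs _ _
      _ ≤ ∑ k ∈ range n, εbar * tG k n := by
          refine Finset.sum_le_sum fun k _ => ?_
          rw [abs_mul]
          refine mul_le_mul (hε k) ?_ (abs_nonneg _) hε0
          -- |Sg L k n| ≤ tG k n
          unfold Sg tG Sg
          calc |∑ m ∈ range n, cG k n m * L m|
              ≤ ∑ m ∈ range n, |cG k n m * L m| := Finset.abs_sum_le_sum_abs _ _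
            _ ≤ ∑ m ∈ range n, cG k n m * (fun _ => (1:ℝ)) m := by
                refine Finset.sum_le_sum fun m _ => ?_
                rw [abs_mul, abs_of_nonneg ((cG_invariant k n).1 m)]
                simp only [mul_one]
                calc cG k n m * |L m| ≤ cG k n m * 1 :=
                      mul_le_mul_of_nonneg_left (leg_bound hx hx' m) ((cG_invariant k n).1 m)
                  _ = cG k n m := mul_one _
      _ = εbar * TT n := by rw [← Finset.mul_sum]; rfl
  calc |p n - L n| ≤ εbar * TT n := habs
    _ = εbar * ((n:ℝ)*((n:ℝ)+3)/4) := by rw [(TT_val n).1]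
    _ ≤ ((n:ℝ)+1) * ((n:ℝ)+2) / 4 * εbar := by nlinarith [hε0, Nat.cast_nonneg (α := ℝ) n]
end
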